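/- (Sufficiency completeness.) Assume: (SinM) for each case-test index i there exists a single-matched trace t with ctr(t) = {(i, ρ)} for some ρ; (Suff) for all t and S ∈ vf t there exists t' with vf t' = {S}, cor t' ⊆ S, and r t t'; (Ver) vf t = ∅ ↔ sat t for all t; (RelE) r t t' with ¬sat t and ¬sat t' implies ctr(t') ⊆ ctr(t); and blame is injective in the sense that blame i ρ = blame j ρ' with (j,ρ') ∈ ctr(t') implies, for single-matched t' with vf t' = {blame i ρ}, that ctr(t') = {(i, ρ)} when ctr(t') ⊆ {(i, ρ)} and ctr t' nonempty. Then for each index i there exists a trace t' and ρ with ctr(t') = {(i, ρ)} and cor(t') ⊆ blame(i, ρ). -/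
import Mathlib


theorem stmt13 {T P I R : Type*} [Finite I]
    (sat : T → Prop) (cor : T → Finset P) (r : T → T → Prop)
    (matchesP : I → R → T → Prop) (blame : I → R → Finset P)
    (ctr : T → Set (I × R))
    (hctr : ∀ t, ctr t = {p : I × R | matchesP p.1 p.2 t})
    (vf : T → Set (Finset P))
    (hvf : ∀ t, vf t = {S : Finset P | ∃ i ρ, matchesP i ρ t ∧ blame i ρ = S})
    (hSinM : ∀ i : I, ∃ (t : T) (ρ : R), ctr t = {(i, ρ)})
    (hSuff : ∀ t S, S ∈ vf t → ∃ t', vf t' = {S} ∧ cor t' ⊆ S ∧ r t t')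
    (hVer : ∀ t, vf t = ∅ ↔ sat t)
    (hRelE : ∀ t t', r t t' → ¬ sat t → ¬ sat t' → ctr t' ⊆ ctr t)
    (hinj : ∀ (i : I) (ρ : R) (t' : T), vf t' = {blame i ρ} →
      ctr t' ⊆ {(i, ρ)} → (ctr t').Nonempty → ctr t' = {(i, ρ)}) :
    ∀ i : I, ∃ (t' : T) (ρ : R), ctr t' = {(i, ρ)} ∧ cor t' ⊆ blame i ρ := by
  intro i
  obtain ⟨t, ρ, ht⟩ := hSinM i
  have hmatch : matchesP i ρ t := by
    have : (i, ρ) ∈ ctr t := by rw [ht]; rfl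
    rwa [hctr] at this
  have hSvf : blame i ρ ∈ vf t := by
    rw [hvf]; exact ⟨i, ρ, hmatch, rfl⟩
  obtain ⟨t', hvft', hcor, hr⟩ := hSuff t _ hSvf
  have hnsat : ¬ sat t := by
    intro hs
    have := (hVer t).mpr hs
    rw [this] at hSvf; exact hSvf
  have hnsat' : ¬ sat t' := by
    intro hs
    have := (hVer t').mpr hs
    rw [this] at hvft'
    exact (Set.singleton_ne_empty _) hvft'.symm
  have hsub : ctr t' ⊆ ctr t := hRelE t t' hr hnsat hnsat'
  rw [ht] at hsub
  have hne : (ctr t').Nonempty := by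
    have : blame i ρ ∈ vf t' := by rw [hvft']; rfl
    rw [hvf] at this
    obtain ⟨j, ρ', hm, _⟩ := this
    exact ⟨(j, ρ'), by rw [hctr]; exact hm⟩
  exact ⟨t', ρ, hinj i ρ t' hvft' hsub hne, hcor⟩
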